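/- Let n ≥ 1, let Y = [0,1)ⁿ, let χ₁ : Y → {0,1} be measurable, χ₂ = 1 − χ₁, θᵢ = ∫_Y χᵢ dy, let 0 < σ₁, σ₂ < ∞ and 1 < p₁ ≤ p₂, and let A(y, ζ) = σ(y) |ζ|^{p(y)−2} ζ with σ(y) = χ₁(y)σ₁ + χ₂(y)σ₂ and p(y) = χ₁(y)p₁ + χ₂(y)p₂ (and A(y,0) = 0). There exists a constant C > 0, depending only on n, σ₁, σ₂, p₁, p₂, such that the following holds: for every ξ ∈ ℝⁿ and every measurable vector field V : Y → ℝⁿ satisfying the cell-problem energy identity ∫_Y ⟨A(y, V(y)), V(y)⟩ dy = ∫_Y ⟨A(y, V(y)), ξ⟩ dy (with both sides finite), one has ∫_Y χ₁(y) |V(y)|^{p₁} dy + ∫_Y χ₂(y) |V(y)|^{p₂} dy ≤ C (1 + |ξ|^{p₁} θ₁ + |ξ|^{p₂} θ₂). (This is Lemma 3.1, the a priori bound for the corrector field P(·, ξ) = ξ + ∇υ_ξ, stated with the energy identity—which the cell problem provides—taken as a hypothesis.) -/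

import Mathlib

open MeasureTheory Classical
open scoped ENNReal NNReal

/-- The unit period cell `Y = [0,1)ⁿ`. -/
def unitCell (n : ℕ) : Set (EuclideanSpace ℝ (Fin n)) :=
  {y | ∀ i, y i ∈ Set.Ico (0 : ℝ) 1}

/-- The two-phase power-law constitutive map
`A(y, ζ) = σ(y) |ζ|^{p(y)−2} ζ` (with `A(y, 0) = 0`), where
`σ(y) = χ₁(y)σ₁ + χ₂(y)σ₂` and `p(y) = χ₁(y)p₁ + χ₂(y)p₂`, `χ₂ = 1 − χ₁`. -/
noncomputable def twoPhaseA (n : ℕ) (σ₁ σ₂ p₁ p₂ : ℝ)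
    (χ₁ : EuclideanSpace ℝ (Fin n) → ℝ) (y ζ : EuclideanSpace ℝ (Fin n)) :
    EuclideanSpace ℝ (Fin n) :=
  if ζ = 0 then 0 else
    ((χ₁ y * σ₁ + (1 - χ₁ y) * σ₂) *
      ‖ζ‖ ^ (χ₁ y * p₁ + (1 - χ₁ y) * p₂ - 2)) • ζ

/-! ### Auxiliary lemmas -/

private lemma young_aux {t s ε p : ℝ} (ht : 0 ≤ t) (hs : 0 ≤ s) (hε : 0 < ε) (hp : 1 < p) :
    t ^ (p - 1) * s ≤ ε * t ^ p + ε⁻¹ ^ (p - 1) * s ^ p := by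
  have hp1 : (0:ℝ) < p - 1 := by linarith
  have hKn : (0:ℝ) ≤ ε⁻¹ ^ (p - 1) * s ^ p := by positivity
  have hpow : ∀ u : ℝ, 0 ≤ u → u ^ (p - 1) * u = u ^ p := by
    intro u hu
    rcases eq_or_lt_of_le hu with h0 | h0
    · rw [← h0, Real.zero_rpow (by linarith : p - 1 ≠ 0),
        Real.zero_rpow (by linarith : p ≠ 0), zero_mul]
    · calc u ^ (p - 1) * u = u ^ (p - 1) * u ^ (1:ℝ) := by rw [Real.rpow_one]
        _ = u ^ (p - 1 + 1) := (Real.rpow_add h0 _ _).symm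
        _ = u ^ p := by rw [show p - 1 + 1 = p by ring]
  rcases le_or_gt s (ε * t) with h | h
  · have h1 : t ^ (p - 1) * s ≤ t ^ (p - 1) * (ε * t) :=
      mul_le_mul_of_nonneg_left h (Real.rpow_nonneg ht _)
    have h2 : t ^ (p - 1) * (ε * t) = ε * t ^ p := by
      rw [show t ^ (p - 1) * (ε * t) = ε * (t ^ (p - 1) * t) by ring, hpow t ht]
    linarith
  · have hs0 : 0 < s := lt_of_le_of_lt (mul_nonneg hε.le ht) h
    have ht2 : t ≤ ε⁻¹ * s := by
      have h' : ε⁻¹ * (ε * t) ≤ ε⁻¹ * s :=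
        mul_le_mul_of_nonneg_left h.le (inv_nonneg.mpr hε.le)
      rwa [← mul_assoc, inv_mul_cancel₀ hε.ne', one_mul] at h'
    have h3 : t ^ (p - 1) ≤ (ε⁻¹ * s) ^ (p - 1) :=
      Real.rpow_le_rpow ht ht2 hp1.le
    have h4 : (ε⁻¹ * s) ^ (p - 1) = ε⁻¹ ^ (p - 1) * s ^ (p - 1) :=
      Real.mul_rpow (inv_nonneg.mpr hε.le) hs
    have h5 : t ^ (p - 1) * s ≤ ε⁻¹ ^ (p - 1) * s ^ (p - 1) * s :=
      mul_le_mul_of_nonneg_right (h4 ▸ h3) hs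
    have h6 : ε⁻¹ ^ (p - 1) * s ^ (p - 1) * s = ε⁻¹ ^ (p - 1) * s ^ p := by
      rw [mul_assoc, hpow s hs]
    have h7 : 0 ≤ ε * t ^ p := by positivity
    linarith
  
private lemma inner_smul_self_eq {E : Type*} [NormedAddCommGroup E] [InnerProductSpace ℝ E]
    (s q : ℝ) (ζ : E) (hζ : ζ ≠ 0) :
    (inner ℝ ((s * ‖ζ‖ ^ (q - 2)) • ζ) ζ : ℝ) = s * ‖ζ‖ ^ q := by
  have h : (0:ℝ) < ‖ζ‖ := norm_pos_iff.mpr hζ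
  rw [real_inner_smul_left, real_inner_self_eq_norm_sq, ← Real.rpow_natCast ‖ζ‖ 2,
    mul_assoc, ← Real.rpow_add h]
  norm_num

private lemma abs_inner_smul_le {E : Type*} [NormedAddCommGroup E] [InnerProductSpace ℝ E]
    (s q : ℝ) (hs : 0 ≤ s) (ζ ξ : E) (hζ : ζ ≠ 0) :
    |(inner ℝ ((s * ‖ζ‖ ^ (q - 2)) • ζ) ξ : ℝ)| ≤ s * ‖ζ‖ ^ (q - 1) * ‖ξ‖ := by
  have h0 : (0:ℝ) < ‖ζ‖ := norm_pos_iff.mpr hζ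
  rw [real_inner_smul_left, abs_mul,
    abs_of_nonneg (mul_nonneg hs (Real.rpow_nonneg h0.le _))]
  calc s * ‖ζ‖ ^ (q - 2) * |(inner ℝ ζ ξ : ℝ)|
      ≤ s * ‖ζ‖ ^ (q - 2) * (‖ζ‖ * ‖ξ‖) := by
        exact mul_le_mul_of_nonneg_left (abs_real_inner_le_norm _ _) (by positivity)
    _ = s * ‖ζ‖ ^ (q - 1) * ‖ξ‖ := by
        rw [show q - 1 = (q - 2) + 1 by ring, Real.rpow_add h0, Real.rpow_one]; ring

private lemma pointwise_lower {E : Type*} [NormedAddCommGroup E] [InnerProductSpace ℝ E]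
    {m s q : ℝ} (hms : m ≤ s) (hq : 1 < q) (ζ : E) :
    m * ‖ζ‖ ^ q ≤ (inner ℝ (if ζ = 0 then (0:E) else (s * ‖ζ‖ ^ (q - 2)) • ζ) ζ : ℝ) := by
  by_cases hv : ζ = 0
  · simp [hv, Real.zero_rpow (by linarith : q ≠ 0)]
  · rw [if_neg hv, inner_smul_self_eq s q ζ hv]
    exact mul_le_mul_of_nonneg_right hms (Real.rpow_nonneg (norm_nonneg _) _)

private lemma pointwise_upper {E : Type*} [NormedAddCommGroup E] [InnerProductSpace ℝ E]
    {Mx s q ε : ℝ} (hs : 0 ≤ s) (hsM : s ≤ Mx) (hq : 1 < q) (hε : 0 < ε) (ζ ξ : E) :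
    |(inner ℝ (if ζ = 0 then (0:E) else (s * ‖ζ‖ ^ (q - 2)) • ζ) ξ : ℝ)| ≤
      Mx * ε * ‖ζ‖ ^ q + Mx * ε⁻¹ ^ (q - 1) * ‖ξ‖ ^ q := by
  have hM0 : 0 ≤ Mx := le_trans hs hsM
  by_cases hv : ζ = 0
  · simp only [hv, if_pos, inner_zero_left, abs_zero]
    positivity
  · rw [if_neg hv]
    calc |(inner ℝ ((s * ‖ζ‖ ^ (q - 2)) • ζ) ξ : ℝ)|
        ≤ s * ‖ζ‖ ^ (q - 1) * ‖ξ‖ := abs_inner_smul_le s q hs ζ ξ hv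
      _ ≤ Mx * (‖ζ‖ ^ (q - 1) * ‖ξ‖) := by
          rw [mul_assoc]
          exact mul_le_mul_of_nonneg_right hsM (by positivity)
      _ ≤ Mx * (ε * ‖ζ‖ ^ q + ε⁻¹ ^ (q - 1) * ‖ξ‖ ^ q) :=
          mul_le_mul_of_nonneg_left
            (young_aux (norm_nonneg _) (norm_nonneg _) hε hq) hM0
      _ = Mx * ε * ‖ζ‖ ^ q + Mx * ε⁻¹ ^ (q - 1) * ‖ξ‖ ^ q := by ring

private lemma unitCell_preimage (n : ℕ) :
    unitCell n = (MeasurableEquiv.toLp 2 (Fin n → ℝ)).symm ⁻¹'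
      (Set.univ.pi fun _ : Fin n => Set.Ico (0:ℝ) 1) := by
  ext y
  simp only [unitCell, Set.mem_setOf_eq, Set.mem_preimage, Set.mem_pi, Set.mem_univ,
    forall_true_left]
  exact Iff.rfl

private lemma measurableSet_unitCell (n : ℕ) : MeasurableSet (unitCell n) := by
  rw [unitCell_preimage]
  exact (MeasurableEquiv.toLp 2 (Fin n → ℝ)).symm.measurable
    (MeasurableSet.univ_pi fun _ => measurableSet_Ico)

private lemma volume_unitCell (n : ℕ) : volume (unitCell n) = 1 := by
  rw [unitCell_preimage,
    (EuclideanSpace.volume_preserving_symm_measurableEquiv_toLp (Fin n)).measure_preimage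
      ((MeasurableSet.univ_pi fun _ => measurableSet_Ico).nullMeasurableSet)]
  simp [volume_pi_pi, Real.volume_Ico]

set_option maxHeartbeats 1000000 in
/-- Lemma 3.1: the a priori bound for the corrector field.  If `V` satisfies the
cell-problem energy identity `∫_Y ⟨A(y, V), V⟩ = ∫_Y ⟨A(y, V), ξ⟩`, then
`∫_Y χ₁|V|^{p₁} + ∫_Y χ₂|V|^{p₂} ≤ C (1 + |ξ|^{p₁}θ₁ + |ξ|^{p₂}θ₂)` with `C`
depending only on `n, σ₁, σ₂, p₁, p₂`. -/
theorem corrector_apriori_bound (n : ℕ) (hn : 1 ≤ n) (σ₁ σ₂ p₁ p₂ : ℝ)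
    (hσ₁ : 0 < σ₁) (hσ₂ : 0 < σ₂) (hp₁ : 1 < p₁) (hp₁₂ : p₁ ≤ p₂) :
    ∃ C : ℝ, 0 < C ∧
      ∀ χ₁ : EuclideanSpace ℝ (Fin n) → ℝ, Measurable χ₁ →
        (∀ y, χ₁ y = 0 ∨ χ₁ y = 1) →
      ∀ (ξ : EuclideanSpace ℝ (Fin n))
        (V : EuclideanSpace ℝ (Fin n) → EuclideanSpace ℝ (Fin n)), Measurable V →
        IntegrableOn
          (fun y => (inner ℝ (twoPhaseA n σ₁ σ₂ p₁ p₂ χ₁ y (V y)) (V y) : ℝ)) (unitCell n) →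
        IntegrableOn
          (fun y => (inner ℝ (twoPhaseA n σ₁ σ₂ p₁ p₂ χ₁ y (V y)) ξ : ℝ)) (unitCell n) →
        (∫ y in unitCell n, (inner ℝ (twoPhaseA n σ₁ σ₂ p₁ p₂ χ₁ y (V y)) (V y) : ℝ)) =
          (∫ y in unitCell n, (inner ℝ (twoPhaseA n σ₁ σ₂ p₁ p₂ χ₁ y (V y)) ξ : ℝ)) →
        (∫⁻ y in unitCell n, ENNReal.ofReal (χ₁ y) * (‖V y‖₊ : ℝ≥0∞) ^ p₁) +
          (∫⁻ y in unitCell n, ENNReal.ofReal (1 - χ₁ y) * (‖V y‖₊ : ℝ≥0∞) ^ p₂) ≤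
          ENNReal.ofReal (C * (1 + ‖ξ‖ ^ p₁ * (∫ y in unitCell n, χ₁ y) +
            ‖ξ‖ ^ p₂ * (∫ y in unitCell n, (1 - χ₁ y)))) := by
  have hp₂ : 1 < p₂ := lt_of_lt_of_le hp₁ hp₁₂
  set m : ℝ := min σ₁ σ₂ with hm_def
  set Mx : ℝ := max σ₁ σ₂ with hMx_def
  have hm : 0 < m := lt_min hσ₁ hσ₂
  have hMx : 0 < Mx := lt_of_lt_of_le hσ₁ (le_max_left _ _)
  have hmM : m ≤ Mx := le_trans (min_le_left _ _) (le_max_left _ _)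
  set ε : ℝ := m / (2 * Mx) with hε_def
  have hε : 0 < ε := div_pos hm (by linarith)
  have hε1 : ε ≤ 1 := by
    rw [hε_def, div_le_one (by linarith)]; linarith
  have hεinv : 1 ≤ ε⁻¹ := (one_le_inv₀ hε).mpr hε1
  set K : ℝ := ε⁻¹ ^ (p₂ - 1) with hK_def
  have hK : 0 < K := Real.rpow_pos_of_pos (by positivity) _
  have hMε : Mx * ε = m / 2 := by
    rw [hε_def]; field_simp
  refine ⟨1 + 2 * Mx * K / m, by positivity, ?_⟩
  intro χ₁ hχm hχ01 ξ V hVm hFint hGint hEq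
  set S := unitCell n with hS_def
  have hχ0 : ∀ y, 0 ≤ χ₁ y ∧ χ₁ y ≤ 1 := by
    intro y; rcases hχ01 y with h | h <;> simp [h]
  -- the two key auxiliary functions
  set W : EuclideanSpace ℝ (Fin n) → ℝ :=
    fun y => χ₁ y * ‖V y‖ ^ p₁ + (1 - χ₁ y) * ‖V y‖ ^ p₂ with hW_def
  set Ξ : EuclideanSpace ℝ (Fin n) → ℝ :=
    fun y => χ₁ y * ‖ξ‖ ^ p₁ + (1 - χ₁ y) * ‖ξ‖ ^ p₂ with hΞ_def
  have hWnn : ∀ y, 0 ≤ W y := by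
    intro y
    have := (hχ0 y).1; have := (hχ0 y).2
    have h1 : (0:ℝ) ≤ ‖V y‖ ^ p₁ := Real.rpow_nonneg (norm_nonneg _) _
    have h2 : (0:ℝ) ≤ ‖V y‖ ^ p₂ := Real.rpow_nonneg (norm_nonneg _) _
    rw [hW_def]
    have : (0:ℝ) ≤ 1 - χ₁ y := by linarith
    positivity
  have hΞnn : ∀ y, 0 ≤ Ξ y := by
    intro y
    have := (hχ0 y).1; have := (hχ0 y).2
    have h1 : (0:ℝ) ≤ ‖ξ‖ ^ p₁ := Real.rpow_nonneg (norm_nonneg _) _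
    have h2 : (0:ℝ) ≤ ‖ξ‖ ^ p₂ := Real.rpow_nonneg (norm_nonneg _) _
    rw [hΞ_def]
    have : (0:ℝ) ≤ 1 - χ₁ y := by linarith
    positivity
  -- phase decomposition of `twoPhaseA`
  have hA1 : ∀ y, χ₁ y = 1 → twoPhaseA n σ₁ σ₂ p₁ p₂ χ₁ y (V y) =
      if V y = 0 then 0 else (σ₁ * ‖V y‖ ^ (p₁ - 2)) • V y := by
    intro y hc; simp [twoPhaseA, hc]
  have hA2 : ∀ y, χ₁ y = 0 → twoPhaseA n σ₁ σ₂ p₁ p₂ χ₁ y (V y) =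
      if V y = 0 then 0 else (σ₂ * ‖V y‖ ^ (p₂ - 2)) • V y := by
    intro y hc; simp [twoPhaseA, hc]
  -- pointwise lower bound
  have h1 : ∀ y, m * W y ≤ (inner ℝ (twoPhaseA n σ₁ σ₂ p₁ p₂ χ₁ y (V y)) (V y) : ℝ) := by
    intro y
    rcases hχ01 y with hc | hc
    · rw [hA2 y hc]
      have hWy : W y = ‖V y‖ ^ p₂ := by rw [hW_def]; simp [hc]
      rw [hWy]
      convert pointwise_lower (min_le_right σ₁ σ₂) hp₂ (V y)
    · rw [hA1 y hc]
      have hWy : W y = ‖V y‖ ^ p₁ := by rw [hW_def]; simp [hc]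
      rw [hWy]
      convert pointwise_lower (min_le_left σ₁ σ₂) hp₁ (V y)
  -- pointwise upper bound on |G|
  have h2 : ∀ y, |(inner ℝ (twoPhaseA n σ₁ σ₂ p₁ p₂ χ₁ y (V y)) ξ : ℝ)| ≤
      m / 2 * W y + Mx * K * Ξ y := by
    intro y
    rcases hχ01 y with hc | hc
    · rw [hA2 y hc]
      have hWy : W y = ‖V y‖ ^ p₂ := by rw [hW_def]; simp [hc]
      have hΞy : Ξ y = ‖ξ‖ ^ p₂ := by rw [hΞ_def]; simp [hc]
      rw [hWy, hΞy]
      have := pointwise_upper (Mx := Mx) hσ₂.le (le_max_right _ _) hp₂ hε (V y) ξ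
      rw [hMε] at this
      rw [hK_def]
      convert this
    · rw [hA1 y hc]
      have hWy : W y = ‖V y‖ ^ p₁ := by rw [hW_def]; simp [hc]
      have hΞy : Ξ y = ‖ξ‖ ^ p₁ := by rw [hΞ_def]; simp [hc]
      rw [hWy, hΞy]
      have hyoung := pointwise_upper (Mx := Mx) hσ₁.le (le_max_left _ _) hp₁ hε (V y) ξ
      rw [hMε] at hyoung
      refine le_trans (b := m / 2 * ‖V y‖ ^ p₁ + Mx * ε⁻¹ ^ (p₁ - 1) * ‖ξ‖ ^ p₁) (by convert hyoung; rfl) ?_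
      have hKK : ε⁻¹ ^ (p₁ - 1) ≤ K := by
        rw [hK_def]
        exact Real.rpow_le_rpow_of_exponent_le hεinv (by linarith)
      have h0 : (0:ℝ) ≤ ‖ξ‖ ^ p₁ := Real.rpow_nonneg (norm_nonneg _) _
      have : Mx * ε⁻¹ ^ (p₁ - 1) * ‖ξ‖ ^ p₁ ≤ Mx * K * ‖ξ‖ ^ p₁ := by
        apply mul_le_mul_of_nonneg_right _ h0
        exact mul_le_mul_of_nonneg_left hKK hMx.le
      linarith
  -- measurability
  have hWmeas : Measurable W := by rw [hW_def]; fun_prop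
  have hΞmeas : Measurable Ξ := by rw [hΞ_def]; fun_prop
  have hvolS : volume S < ⊤ := by rw [hS_def, volume_unitCell]; exact ENNReal.one_lt_top
  -- integrability of W
  have hWint : IntegrableOn W S := by
    refine Integrable.mono' (hFint.const_mul m⁻¹) hWmeas.aestronglyMeasurable
      (ae_of_all _ fun y => ?_)
    rw [Real.norm_of_nonneg (hWnn y)]
    have h' := mul_le_mul_of_nonneg_left (h1 y) (inv_nonneg.mpr hm.le)
    rwa [← mul_assoc, inv_mul_cancel₀ hm.ne', one_mul] at h'
  -- integrability of Ξ
  have hΞint : IntegrableOn Ξ S := by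
    refine Integrable.mono' (g := fun _ => ‖ξ‖ ^ p₁ + ‖ξ‖ ^ p₂)
      (integrableOn_const hvolS.ne) hΞmeas.aestronglyMeasurable
      (ae_of_all _ fun y => ?_)
    show ‖Ξ y‖ ≤ ‖ξ‖ ^ p₁ + ‖ξ‖ ^ p₂
    rw [Real.norm_of_nonneg (hΞnn y)]
    have h1' : (0:ℝ) ≤ ‖ξ‖ ^ p₁ := Real.rpow_nonneg (norm_nonneg _) _
    have h2' : (0:ℝ) ≤ ‖ξ‖ ^ p₂ := Real.rpow_nonneg (norm_nonneg _) _
    show χ₁ y * ‖ξ‖ ^ p₁ + (1 - χ₁ y) * ‖ξ‖ ^ p₂ ≤ ‖ξ‖ ^ p₁ + ‖ξ‖ ^ p₂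
    nlinarith [(hχ0 y).1, (hχ0 y).2]
  -- integrability of χ₁ and 1 - χ₁
  have hχint : IntegrableOn χ₁ S := by
    refine Integrable.mono' (g := fun _ => (1:ℝ))
      (integrableOn_const hvolS.ne) hχm.aestronglyMeasurable
      (ae_of_all _ fun y => ?_)
    rw [Real.norm_of_nonneg (hχ0 y).1]; exact (hχ0 y).2
  have hχ2int : IntegrableOn (fun y => 1 - χ₁ y) S := by
    refine Integrable.mono' (g := fun _ => (1:ℝ))
      (integrableOn_const hvolS.ne)
      ((measurable_const.sub hχm).aestronglyMeasurable)
      (ae_of_all _ fun y => ?_)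
    show ‖1 - χ₁ y‖ ≤ 1
    rw [Real.norm_of_nonneg (by linarith [(hχ0 y).2])]
    linarith [(hχ0 y).1]
  -- the main real-variable estimate
  set IW : ℝ := ∫ y in S, W y with hIW_def
  set IΞ : ℝ := ∫ y in S, Ξ y with hIΞ_def
  have e1 : m * IW ≤ ∫ y in S, (inner ℝ (twoPhaseA n σ₁ σ₂ p₁ p₂ χ₁ y (V y)) (V y) : ℝ) := by
    rw [hIW_def, ← integral_const_mul]
    exact integral_mono (hWint.const_mul m) hFint h1
  have e2 : (∫ y in S, (inner ℝ (twoPhaseA n σ₁ σ₂ p₁ p₂ χ₁ y (V y)) (V y) : ℝ)) ≤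
      m / 2 * IW + Mx * K * IΞ := by
    rw [hEq]
    have habs : (∫ y in S, (inner ℝ (twoPhaseA n σ₁ σ₂ p₁ p₂ χ₁ y (V y)) ξ : ℝ)) ≤
        ∫ y in S, |(inner ℝ (twoPhaseA n σ₁ σ₂ p₁ p₂ χ₁ y (V y)) ξ : ℝ)| := by
      refine le_trans (le_abs_self _) ?_
      simpa [Real.norm_eq_abs] using
        norm_integral_le_integral_norm (μ := volume.restrict S)
          (fun y => (inner ℝ (twoPhaseA n σ₁ σ₂ p₁ p₂ χ₁ y (V y)) ξ : ℝ))
    refine le_trans habs ?_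
    have hbint : IntegrableOn (fun y => m / 2 * W y + Mx * K * Ξ y) S :=
      (hWint.const_mul _).add (hΞint.const_mul _)
    have := integral_mono hGint.abs hbint h2
    rwa [integral_add (hWint.const_mul _) (hΞint.const_mul _),
      integral_const_mul, integral_const_mul] at this
  have hIΞnn : 0 ≤ IΞ := integral_nonneg hΞnn
  have hIW_bound : IW ≤ 2 * Mx * K / m * IΞ := by
    have h' : m / 2 * IW ≤ Mx * K * IΞ := by linarith
    have h'' := mul_le_mul_of_nonneg_left h' (by positivity : (0:ℝ) ≤ 2 / m)
    calc IW = 2 / m * (m / 2 * IW) := by field_simp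
      _ ≤ 2 / m * (Mx * K * IΞ) := h''
      _ = 2 * Mx * K / m * IΞ := by ring
  -- identify IΞ with the right-hand side data
  have hIΞ_eq : IΞ = ‖ξ‖ ^ p₁ * (∫ y in S, χ₁ y) + ‖ξ‖ ^ p₂ * (∫ y in S, (1 - χ₁ y)) := by
    rw [hIΞ_def, hΞ_def]
    rw [integral_add (hχint.mul_const _) (hχ2int.mul_const _),
      integral_mul_const, integral_mul_const]
    ring
  -- convert the goal's lintegrals into `ofReal` of the integral of W
  have hmeas1 : Measurable fun y => ENNReal.ofReal (χ₁ y * ‖V y‖ ^ p₁) := by fun_prop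
  have hL1 : (∫⁻ y in S, ENNReal.ofReal (χ₁ y) * (‖V y‖₊ : ℝ≥0∞) ^ p₁) =
      ∫⁻ y in S, ENNReal.ofReal (χ₁ y * ‖V y‖ ^ p₁) := by
    refine lintegral_congr fun y => ?_
    rw [show (‖V y‖₊ : ℝ≥0∞) = ENNReal.ofReal ‖V y‖ from (ofReal_norm _).symm,
      ENNReal.ofReal_rpow_of_nonneg (norm_nonneg _) (by linarith),
      ← ENNReal.ofReal_mul (hχ0 y).1]
  have hL2 : (∫⁻ y in S, ENNReal.ofReal (1 - χ₁ y) * (‖V y‖₊ : ℝ≥0∞) ^ p₂) =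
      ∫⁻ y in S, ENNReal.ofReal ((1 - χ₁ y) * ‖V y‖ ^ p₂) := by
    refine lintegral_congr fun y => ?_
    rw [show (‖V y‖₊ : ℝ≥0∞) = ENNReal.ofReal ‖V y‖ from (ofReal_norm _).symm,
      ENNReal.ofReal_rpow_of_nonneg (norm_nonneg _) (by linarith),
      ← ENNReal.ofReal_mul (by linarith [(hχ0 y).2])]
  have hsum : (∫⁻ y in S, ENNReal.ofReal (χ₁ y * ‖V y‖ ^ p₁)) +
      (∫⁻ y in S, ENNReal.ofReal ((1 - χ₁ y) * ‖V y‖ ^ p₂)) =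
      ∫⁻ y in S, ENNReal.ofReal (W y) := by
    rw [← lintegral_add_left hmeas1]
    refine lintegral_congr fun y => ?_
    rw [hW_def]
    exact (ENNReal.ofReal_add (mul_nonneg (hχ0 y).1 (Real.rpow_nonneg (norm_nonneg _) _))
      (mul_nonneg (by linarith [(hχ0 y).2]) (Real.rpow_nonneg (norm_nonneg _) _))).symm
  have hofReal : (∫⁻ y in S, ENNReal.ofReal (W y)) = ENNReal.ofReal IW :=
    (ofReal_integral_eq_lintegral_ofReal hWint (ae_of_all _ hWnn)).symm
  rw [hL1, hL2, hsum, hofReal]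
  apply ENNReal.ofReal_le_ofReal
  have hc2 : (0:ℝ) ≤ 2 * Mx * K / m :=
    le_of_lt (div_pos (mul_pos (mul_pos two_pos hMx) hK) hm)
  have hgoal : (1:ℝ) + ‖ξ‖ ^ p₁ * (∫ y in S, χ₁ y) +
      ‖ξ‖ ^ p₂ * (∫ y in S, (1 - χ₁ y)) = 1 + IΞ := by
    rw [hIΞ_eq]; ring
  rw [hgoal]
  nlinarith [mul_nonneg hc2 hIΞnn]
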